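/- For L-layer feedforward networks with 1-Lipschitz activations fixing 0, the Frobenius distance between the layer-ℓ outputs of two networks is bounded: ‖H_Θ^ℓ(Z) - H_Θ̃^ℓ(Z)‖_F ≤ ‖Z‖_F · Σ_{j=1}^{ℓ} (∏_{k≠j, k≤ℓ} B_k) · ‖W^j - W̃^j‖_F, where B_k = max(‖W^k‖₂, ‖W̃^k‖₂). -/

import Mathlib

open Matrix
open scoped Matrix.Norms.L2Operator

noncomputable def frobNorm {m n : Type*} [Fintype m] [Fintype n] (A : Matrix m n ℝ) : ℝ :=
  Real.sqrt (∑ i, ∑ j, (A i j) ^ 2)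

noncomputable def specNorm {m n : Type*} [Fintype m] [Fintype n] [DecidableEq n]
    (A : Matrix m n ℝ) : ℝ :=
  ‖LinearMap.toContinuousLinearMap (Matrix.toEuclideanLin A)‖

section Helpers

variable {m n p : Type*} [Fintype m] [Fintype n] [Fintype p]

lemma specNorm_eq_l2 [DecidableEq n] (A : Matrix m n ℝ) : specNorm A = ‖A‖ := rfl

lemma specNorm_nonneg [DecidableEq n] (A : Matrix m n ℝ) : 0 ≤ specNorm A := norm_nonneg _

lemma specNorm_transpose [DecidableEq m] [DecidableEq n] (A : Matrix m n ℝ) :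
    specNorm Aᵀ = specNorm A := by
  rw [specNorm_eq_l2, specNorm_eq_l2, ← conjTranspose_eq_transpose_of_trivial,
    Matrix.l2_opNorm_conjTranspose]

noncomputable def eN (v : n → ℝ) : ℝ := ‖(WithLp.equiv 2 (n → ℝ)).symm v‖

lemma eN_sq (v : n → ℝ) : eN v ^ 2 = ∑ j, v j ^ 2 := by
  rw [eN, EuclideanSpace.norm_eq, Real.sq_sqrt (by positivity)]
  simp [sq_abs]

lemma eN_nonneg (v : n → ℝ) : 0 ≤ eN v := norm_nonneg _

lemma frobNorm_eq_rows (A : Matrix m n ℝ) :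
    frobNorm A = Real.sqrt (∑ i, eN (A i) ^ 2) := by
  simp [frobNorm, eN_sq]

lemma eN_vecMul [DecidableEq n] [DecidableEq p] (M : Matrix n p ℝ) (v : n → ℝ) :
    eN (v ᵥ* M) ≤ specNorm M * eN v := by
  classical
  have h1 : v ᵥ* M = Mᵀ *ᵥ v := by
    ext j; simp [vecMul, mulVec, dotProduct, transpose_apply, mul_comm]
  have h2 := Matrix.l2_opNorm_mulVec Mᵀ ((WithLp.equiv 2 (n → ℝ)).symm v)
  rw [h1, eN, ← specNorm_transpose M]
  exact h2

lemma frobNorm_nonneg (A : Matrix m n ℝ) : 0 ≤ frobNorm A := Real.sqrt_nonneg _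

lemma frobNorm_eq_norm (A : Matrix m n ℝ) :
    frobNorm A = ‖(WithLp.equiv 2 (m × n → ℝ)).symm (fun q => A q.1 q.2)‖ := by
  rw [EuclideanSpace.norm_eq, frobNorm]
  congr 1
  rw [Fintype.sum_prod_type]
  simp [sq_abs]

lemma frobNorm_add_le (A B : Matrix m n ℝ) :
    frobNorm (A + B) ≤ frobNorm A + frobNorm B := by
  rw [frobNorm_eq_norm, frobNorm_eq_norm, frobNorm_eq_norm]
  exact norm_add_le ((WithLp.equiv 2 (m × n → ℝ)).symm (fun q => A q.1 q.2))
    ((WithLp.equiv 2 (m × n → ℝ)).symm (fun q => B q.1 q.2))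

lemma frobNorm_map_sub_le (A B : Matrix m n ℝ) (f : ℝ → ℝ) (hf : ∀ x y, |f x - f y| ≤ |x - y|) :
    frobNorm (A.map f - B.map f) ≤ frobNorm (A - B) := by
  apply Real.sqrt_le_sqrt
  apply Finset.sum_le_sum; intro i _
  apply Finset.sum_le_sum; intro j _
  have := hf (A i j) (B i j)
  simp only [Matrix.sub_apply, Matrix.map_apply]
  rw [← sq_abs (A i j - B i j), ← sq_abs (f (A i j) - f (B i j))]
  exact pow_le_pow_left₀ (abs_nonneg _) this 2

lemma frobNorm_mul_le_spec [DecidableEq n] [DecidableEq p] (A : Matrix m n ℝ) (M : Matrix n p ℝ) :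
    frobNorm (A * M) ≤ frobNorm A * specNorm M := by
  have h : ∀ i, eN ((A * M) i) ^ 2 ≤ (specNorm M) ^ 2 * eN (A i) ^ 2 := by
    intro i
    have h1 : (A * M) i = (A i) ᵥ* M := by
      ext j; simp [mul_apply, vecMul, dotProduct]
    have he : specNorm M ^ 2 * eN (A i) ^ 2 = (specNorm M * eN (A i)) ^ 2 := by ring
    rw [h1, he]
    exact pow_le_pow_left₀ (eN_nonneg _) (eN_vecMul M (A i)) 2
  calc frobNorm (A * M) = Real.sqrt (∑ i, eN ((A * M) i) ^ 2) := frobNorm_eq_rows _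
    _ ≤ Real.sqrt (∑ i, specNorm M ^ 2 * eN (A i) ^ 2) := by
        apply Real.sqrt_le_sqrt; exact Finset.sum_le_sum fun i _ => h i
    _ = frobNorm A * specNorm M := by
        rw [← Finset.mul_sum, Real.sqrt_mul (by positivity), Real.sqrt_sq (specNorm_nonneg M),
          frobNorm_eq_rows, mul_comm]

lemma specNorm_le_frobNorm [DecidableEq n] (M : Matrix m n ℝ) :
    specNorm M ≤ frobNorm M := by
  apply ContinuousLinearMap.opNorm_le_bound _ (frobNorm_nonneg M)
  intro x
  set v : n → ℝ := WithLp.equiv 2 (n → ℝ) x with hv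
  have hx : x = (WithLp.equiv 2 (n → ℝ)).symm v := rfl
  have happ : (LinearMap.toContinuousLinearMap (Matrix.toEuclideanLin M)) x
      = (WithLp.equiv 2 (m → ℝ)).symm (M *ᵥ v) := by
    rw [hx]
    show (Matrix.toEuclideanLin M) _ = _
    rfl
  rw [happ]
  have hnx : ‖x‖ = eN v := rfl
  have h1 : eN (M *ᵥ v) ^ 2 ≤ (frobNorm M * ‖x‖) ^ 2 := by
    rw [eN_sq, hnx, mul_pow, eN_sq]
    have hF : frobNorm M ^ 2 = ∑ i, ∑ j, (M i j) ^ 2 := by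
      rw [frobNorm, Real.sq_sqrt (by positivity)]
    rw [hF, Finset.sum_mul]
    apply Finset.sum_le_sum; intro i _
    have := Finset.sum_mul_sq_le_sq_mul_sq Finset.univ (fun j => M i j) v
    simpa [mulVec, dotProduct] using this
  have h2 := Real.sqrt_le_sqrt h1
  rwa [Real.sqrt_sq (eN_nonneg _), Real.sqrt_sq (mul_nonneg (frobNorm_nonneg M) (norm_nonneg x))] at h2

lemma frobNorm_map_le (A : Matrix m n ℝ) (f : ℝ → ℝ) (hf : ∀ x, |f x| ≤ |x|) :
    frobNorm (A.map f) ≤ frobNorm A := by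
  apply Real.sqrt_le_sqrt
  apply Finset.sum_le_sum; intro i _
  apply Finset.sum_le_sum; intro j _
  simp only [Matrix.map_apply]
  rw [← sq_abs (A i j), ← sq_abs (f (A i j))]
  exact pow_le_pow_left₀ (abs_nonneg _) (hf (A i j)) 2

end Helpers

/-- Layer outputs of a feedforward network: H⁰ = Z, H^{ℓ+1} = σ_{ℓ+1}(H^ℓ W^{ℓ+1}),
where `W j` is the weight matrix of layer `j+1` and activations act entrywise. -/
noncomputable def layerOut {nn : ℕ} {d : ℕ → ℕ} (Z : Matrix (Fin nn) (Fin (d 0)) ℝ)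
    (W : ∀ j : ℕ, Matrix (Fin (d j)) (Fin (d (j + 1))) ℝ) (σ : ℕ → ℝ → ℝ) :
    (ℓ : ℕ) → Matrix (Fin nn) (Fin (d ℓ)) ℝ
  | 0 => Z
  | (ℓ + 1) => ((layerOut Z W σ ℓ) * W ℓ).map (σ (ℓ + 1))

/-- Telescoping bound for L-layer feedforward networks with 1-Lipschitz activations
fixing 0: ‖H_Θ^ℓ(Z) - H_Θ̃^ℓ(Z)‖_F ≤ ‖Z‖_F · Σ_j (∏_{k≠j,k≤ℓ} B_k)·‖W^j - W̃^j‖_F,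
where B_k = max(‖W^k‖₂, ‖W̃^k‖₂). -/
theorem stmt_6 {nn : ℕ} {d : ℕ → ℕ} (Z : Matrix (Fin nn) (Fin (d 0)) ℝ)
    (W W' : ∀ j : ℕ, Matrix (Fin (d j)) (Fin (d (j + 1))) ℝ)
    (σ : ℕ → ℝ → ℝ) (hσ : ∀ j, LipschitzWith 1 (σ j)) (hσ0 : ∀ j, σ j 0 = 0)
    (B : ℕ → ℝ) (hB : ∀ k, B k = max (specNorm (W k)) (specNorm (W' k))) :
    ∀ ℓ : ℕ,
      frobNorm (layerOut Z W σ ℓ - layerOut Z W' σ ℓ)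
        ≤ frobNorm Z *
            ∑ j ∈ Finset.range ℓ,
              (∏ k ∈ (Finset.range ℓ).erase j, B k) * frobNorm (W j - W' j) := by
  have hBnn : ∀ k, 0 ≤ B k := fun k => (hB k) ▸ le_max_of_le_left (specNorm_nonneg _)
  have hWB : ∀ k, specNorm (W k) ≤ B k := fun k => (hB k) ▸ le_max_left _ _
  have hW'B : ∀ k, specNorm (W' k) ≤ B k := fun k => (hB k) ▸ le_max_right _ _
  have hlip : ∀ j x y, |σ j x - σ j y| ≤ |x - y| := by
    intro j x y
    have := (hσ j).dist_le_mul x y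
    simpa [Real.dist_eq] using this
  have habs : ∀ j x, |σ j x| ≤ |x| := by
    intro j x
    have := hlip j x 0
    simpa [hσ0 j] using this
  -- bound on the second network's layer outputs
  have hH' : ∀ ℓ, frobNorm (layerOut Z W' σ ℓ) ≤ frobNorm Z * ∏ k ∈ Finset.range ℓ, B k := by
    intro ℓ
    induction ℓ with
    | zero => simp [layerOut]
    | succ ℓ ih =>
      calc frobNorm (layerOut Z W' σ (ℓ + 1))
          ≤ frobNorm (layerOut Z W' σ ℓ * W' ℓ) := frobNorm_map_le _ _ (habs (ℓ + 1))
        _ ≤ frobNorm (layerOut Z W' σ ℓ) * specNorm (W' ℓ) := frobNorm_mul_le_spec _ _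
        _ ≤ (frobNorm Z * ∏ k ∈ Finset.range ℓ, B k) * B ℓ := by
            apply mul_le_mul ih (hW'B ℓ) (specNorm_nonneg _)
            exact mul_nonneg (frobNorm_nonneg _) (Finset.prod_nonneg fun k _ => hBnn k)
        _ = frobNorm Z * ∏ k ∈ Finset.range (ℓ + 1), B k := by
            rw [Finset.prod_range_succ]; ring
  intro ℓ
  induction ℓ with
  | zero => simp [layerOut, frobNorm]
  | succ ℓ ih =>
    set Hl := layerOut Z W σ ℓ with hHl
    set H'l := layerOut Z W' σ ℓ with hH'l
    have hSnn : 0 ≤ ∑ j ∈ Finset.range ℓ,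
        (∏ k ∈ (Finset.range ℓ).erase j, B k) * frobNorm (W j - W' j) := by
      apply Finset.sum_nonneg; intro j _
      exact mul_nonneg (Finset.prod_nonneg fun k _ => hBnn k) (frobNorm_nonneg _)
    have hsplit : Hl * W ℓ - H'l * W' ℓ = (Hl - H'l) * W ℓ + H'l * (W ℓ - W' ℓ) := by
      rw [Matrix.sub_mul, Matrix.mul_sub]; abel
    have key : frobNorm (layerOut Z W σ (ℓ + 1) - layerOut Z W' σ (ℓ + 1))
        ≤ (frobNorm Z * ∑ j ∈ Finset.range ℓ,
              (∏ k ∈ (Finset.range ℓ).erase j, B k) * frobNorm (W j - W' j)) * B ℓ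
          + (frobNorm Z * ∏ k ∈ Finset.range ℓ, B k) * frobNorm (W ℓ - W' ℓ) := by
      calc frobNorm (layerOut Z W σ (ℓ + 1) - layerOut Z W' σ (ℓ + 1))
          = frobNorm ((Hl * W ℓ).map (σ (ℓ + 1)) - (H'l * W' ℓ).map (σ (ℓ + 1))) := rfl
        _ ≤ frobNorm (Hl * W ℓ - H'l * W' ℓ) := frobNorm_map_sub_le _ _ _ (hlip (ℓ + 1))
        _ = frobNorm ((Hl - H'l) * W ℓ + H'l * (W ℓ - W' ℓ)) := by rw [hsplit]
        _ ≤ frobNorm ((Hl - H'l) * W ℓ) + frobNorm (H'l * (W ℓ - W' ℓ)) := frobNorm_add_le _ _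
        _ ≤ frobNorm (Hl - H'l) * specNorm (W ℓ) + frobNorm H'l * specNorm (W ℓ - W' ℓ) := by
            exact add_le_add (frobNorm_mul_le_spec _ _) (frobNorm_mul_le_spec _ _)
        _ ≤ (frobNorm Z * ∑ j ∈ Finset.range ℓ,
              (∏ k ∈ (Finset.range ℓ).erase j, B k) * frobNorm (W j - W' j)) * B ℓ
            + (frobNorm Z * ∏ k ∈ Finset.range ℓ, B k) * frobNorm (W ℓ - W' ℓ) := by
            apply add_le_add
            · exact mul_le_mul ih (hWB ℓ) (specNorm_nonneg _)
                (mul_nonneg (frobNorm_nonneg _) hSnn)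
            · exact mul_le_mul (hH' ℓ) (specNorm_le_frobNorm _) (specNorm_nonneg _)
                (mul_nonneg (frobNorm_nonneg _) (Finset.prod_nonneg fun k _ => hBnn k))
    refine key.trans (le_of_eq ?_)
    have h1 : (Finset.range (ℓ + 1)).erase ℓ = Finset.range ℓ := by
      rw [Finset.range_add_one, Finset.erase_insert Finset.notMem_range_self]
    have h2 : ∀ j ∈ Finset.range ℓ,
        (∏ k ∈ (Finset.range (ℓ + 1)).erase j, B k)
          = B ℓ * ∏ k ∈ (Finset.range ℓ).erase j, B k := by
      intro j hj
      have hne : ℓ ≠ j := fun h => (Finset.mem_range.mp hj).ne' h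
      rw [Finset.range_add_one, Finset.erase_insert_of_ne hne,
        Finset.prod_insert (fun h => Finset.notMem_range_self (Finset.mem_of_mem_erase h))]
    have hsum : ∑ j ∈ Finset.range (ℓ + 1),
          (∏ k ∈ (Finset.range (ℓ + 1)).erase j, B k) * frobNorm (W j - W' j)
        = B ℓ * (∑ j ∈ Finset.range ℓ,
              (∏ k ∈ (Finset.range ℓ).erase j, B k) * frobNorm (W j - W' j))
          + (∏ k ∈ Finset.range ℓ, B k) * frobNorm (W ℓ - W' ℓ) := by
      rw [Finset.sum_range_succ, h1, Finset.mul_sum]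
      congr 1
      apply Finset.sum_congr rfl
      intro j hj
      rw [h2 j hj]; ring
    rw [hsum]; ring
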